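/- Let f(x) = x^T Q x where Q is a real symmetric n×n matrix, let r ≥ 2 be an integer, and let Q_max = max_{i ∈ [n]} Q_{ii}. Then ((r−1)/r) · f_min^{(r−2)} ≥ f_{Δ(n,r)} − (1/r) · Q_max. -/

import Mathlib

open Finset

noncomputable section

/-- Falling factorial `t^(d) = t (t-1) ⋯ (t-d+1)`. -/
def fall (t : ℝ) : ℕ → ℝ
  | 0 => 1
  | d + 1 => fall t d * (t - (d : ℝ))

/-- The regular grid `Δ(n,r) = {x ∈ Δ_n : r·x ∈ ℕ^n}`. -/
def regularGrid (n r : ℕ) : Set (Fin n → ℝ) :=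
  {x ∈ stdSimplex ℝ (Fin n) | ∀ i, ∃ k : ℕ, (r : ℝ) * x i = (k : ℝ)}

/-- `f_{Δ(n,r)}`, the minimum of `f` over the regular grid. -/
def minGrid (n r : ℕ) (f : (Fin n → ℝ) → ℝ) : ℝ :=
  sInf (f '' regularGrid n r)

/-- `f̲`, the minimum of `f` over the standard simplex. -/
def minSimplex (n : ℕ) (f : (Fin n → ℝ) → ℝ) : ℝ :=
  sInf (f '' stdSimplex ℝ (Fin n))

/-- `f̄`, the maximum of `f` over the standard simplex. -/
def maxSimplex (n : ℕ) (f : (Fin n → ℝ) → ℝ) : ℝ :=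
  sSup (f '' stdSimplex ℝ (Fin n))

/-- The quadratic form `f(x) = xᵀ Q x`. -/
def quadForm (n : ℕ) (Q : Matrix (Fin n) (Fin n) ℝ) (x : Fin n → ℝ) : ℝ :=
  ∑ i, ∑ j, Q i j * x i * x j

/-- The Pólya-type lower bound for the quadratic form `xᵀQx`:
`f_min^{(r-2)} = min_{α ∈ I(n,r)} [αᵀQα − Σ_i Q_ii α_i] / (r(r−1))`. -/
def quadPolya (n r : ℕ) (Q : Matrix (Fin n) (Fin n) ℝ) : ℝ :=
  sInf ((fun α : Fin n → ℕ =>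
      ((∑ i, ∑ j, Q i j * (α i : ℝ) * (α j : ℝ)) - ∑ i, Q i i * (α i : ℝ)) /
        ((r : ℝ) * ((r : ℝ) - 1))) ''
    {α : Fin n → ℕ | ∑ i, α i = r})

/-- for `f(x) = xᵀQx`, `Q` symmetric and `r ≥ 2`,
`((r−1)/r) f_min^{(r−2)} ≥ f_{Δ(n,r)} − (1/r) Q_max`. -/
theorem statement2 (n r : ℕ) (hn : 0 < n) (hr : 2 ≤ r)
    (Q : Matrix (Fin n) (Fin n) ℝ) (hQ : Q.IsSymm) :
    (((r : ℝ) - 1) / (r : ℝ)) * quadPolya n r Q ≥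
      minGrid n r (quadForm n Q) - (1 / (r : ℝ)) * sSup (Set.range fun i => Q i i) := by
  have hrR : (2:ℝ) ≤ (r:ℝ) := by exact_mod_cast hr
  have hr0 : (0:ℝ) < r := by linarith
  have hr1 : (0:ℝ) < (r:ℝ) - 1 := by linarith
  set M := sSup (Set.range fun i => Q i i) with hMdef
  have hM : ∀ i, Q i i ≤ M := fun i =>
    le_csSup (Set.finite_range _).bddAbove ⟨i, rfl⟩
  -- finiteness of the grid
  have hgridfin : (regularGrid n r).Finite := by
    have hfin : ({α : Fin n → ℕ | ∀ i, α i ≤ r}).Finite := by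
      have := Set.Finite.pi (fun _ : Fin n => Set.finite_Iic r)
      refine this.subset ?_
      intro α hα
      rw [Set.mem_pi]
      intro i _
      exact hα i
    refine (hfin.image (fun (α : Fin n → ℕ) (i : Fin n) => (α i : ℝ)/r)).subset ?_
    rintro x ⟨hx1, hx2⟩
    choose k hk using hx2
    have hxle : ∀ i, x i ≤ 1 := by
      intro i
      calc x i ≤ ∑ j, x j := Finset.single_le_sum (fun j _ => hx1.1 j) (mem_univ i)
      _ = 1 := hx1.2
    refine ⟨k, ?_, ?_⟩
    · intro i
      have : (k i : ℝ) ≤ r := by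
        rw [← hk i]
        nlinarith [hxle i]
      exact_mod_cast this
    · funext i
      have := hk i
      field_simp
      linarith [hk i]
  have hbdd : BddBelow (quadForm n Q '' regularGrid n r) :=
    (hgridfin.image _).bddBelow
  -- key per-α bound
  have key : ∀ α : Fin n → ℕ, ∑ i, α i = r →
      (minGrid n r (quadForm n Q) - (1/(r:ℝ))*M) * ((r:ℝ)/((r:ℝ)-1)) ≤
        ((∑ i, ∑ j, Q i j * (α i : ℝ) * (α j : ℝ)) - ∑ i, Q i i * (α i : ℝ)) /
          ((r : ℝ) * ((r : ℝ) - 1)) := by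
    intro α hα
    set x : Fin n → ℝ := fun i => (α i : ℝ)/r with hxdef
    have hsum : ∑ i, (α i : ℝ) = r := by exact_mod_cast congrArg (Nat.cast : ℕ → ℝ) hα
    have hxgrid : x ∈ regularGrid n r := by
      refine ⟨⟨fun i => by positivity, ?_⟩, fun i => ⟨α i, ?_⟩⟩
      · simp only [hxdef]
        rw [← Finset.sum_div, hsum]
        field_simp
      · simp only [hxdef]
        field_simp
    have hmg : minGrid n r (quadForm n Q) ≤ quadForm n Q x :=
      csInf_le hbdd ⟨x, hxgrid, rfl⟩
    set A := ∑ i, ∑ j, Q i j * (α i : ℝ) * (α j : ℝ) with hAdef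
    set B := ∑ i, Q i i * (α i : ℝ) with hBdef
    have hqf : quadForm n Q x = A / ((r:ℝ)^2) := by
      simp only [quadForm, hxdef, hAdef]
      rw [Finset.sum_div]
      refine Finset.sum_congr rfl fun i _ => ?_
      rw [Finset.sum_div]
      refine Finset.sum_congr rfl fun j _ => ?_
      field_simp
    have hA : minGrid n r (quadForm n Q) * (r:ℝ)^2 ≤ A := by
      rw [hqf] at hmg
      rw [← le_div_iff₀ (by positivity)]
      exact hmg
    have hB : B ≤ M * r := by
      calc B ≤ ∑ i, M * (α i : ℝ) := by
            refine Finset.sum_le_sum fun i _ => ?_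
            have : (0:ℝ) ≤ (α i : ℝ) := by positivity
            nlinarith [hM i]
      _ = M * r := by rw [← Finset.mul_sum, hsum]
    have heq : (minGrid n r (quadForm n Q) - (1/(r:ℝ))*M) * ((r:ℝ)/((r:ℝ)-1)) =
        (minGrid n r (quadForm n Q) * (r:ℝ)^2 - M * r) / ((r:ℝ) * ((r:ℝ)-1)) := by
      field_simp
    rw [heq, div_le_div_iff₀ (by positivity) (by positivity)]
    exact mul_le_mul_of_nonneg_right (by linarith) (le_of_lt (mul_pos hr0 hr1))
  -- nonemptiness of the index set
  have hne : ({α : Fin n → ℕ | ∑ i, α i = r}).Nonempty := by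
    refine ⟨Pi.single ⟨0, hn⟩ r, ?_⟩
    simp [Finset.sum_pi_single']
  have hInf : (minGrid n r (quadForm n Q) - (1/(r:ℝ))*M) * ((r:ℝ)/((r:ℝ)-1)) ≤
      quadPolya n r Q := by
    apply le_csInf (hne.image _)
    rintro s ⟨α, hα, rfl⟩
    exact key α hα
  have hfactor : (((r:ℝ)-1)/(r:ℝ)) * ((minGrid n r (quadForm n Q) - (1/(r:ℝ))*M) * ((r:ℝ)/((r:ℝ)-1)))
      = minGrid n r (quadForm n Q) - (1/(r:ℝ))*M := by
    field_simp
  have := mul_le_mul_of_nonneg_left hInf (by positivity : (0:ℝ) ≤ ((r:ℝ)-1)/(r:ℝ))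
  rw [hfactor] at this
  exact this
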